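/- Suppose Ω is a Cantor group that admits a minimal ℤ^d action by translations {T^n}_{n∈ℤ^d}, f : Ω → ℝ is continuous, and for ω ∈ Ω let V_ω ∈ ℓ∞(ℤ^d) be defined by V_ω(n) = f(T^n ω). Then for each ω ∈ Ω, the hull of V_ω equals {V_{ω̃} : ω̃ ∈ Ω}, i.e., the closure in ℓ∞(ℤ^d) of {S_m V_ω : m ∈ ℤ^d} is exactly the set of all sequences n ↦ f(T^n ω̃) with ω̃ ∈ Ω. -/

import Mathlib

open Filter Topology

/-- Translation action of `ℤ^d` on `ℓ^∞(ℤ^d)`: `(S_m V)(n) = V(n - m)`. -/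
noncomputable def Sh {d : ℕ} (m : Fin d → ℤ) (V : lp (fun _ : Fin d → ℤ => ℝ) ⊤) :
    lp (fun _ : Fin d → ℤ => ℝ) ⊤ :=
  ⟨fun n => V (n - m), by
    show Memℓp (fun n : Fin d → ℤ => V (n - m)) ⊤
    have h : Memℓp (fun n : Fin d → ℤ => V n) ⊤ := lp.memℓp V
    rw [memℓp_infty_iff] at h ⊢
    have hsurj : Function.Surjective (fun n : Fin d → ℤ => n - m) :=
      fun y => ⟨y + m, by simp⟩
    have heq : (Set.range fun n : Fin d → ℤ => ‖V (n - m)‖) =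
        Set.range fun n : Fin d → ℤ => ‖V n‖ := by
      have h2 : (fun n : Fin d → ℤ => ‖V (n - m)‖) =
          (fun n => ‖V n‖) ∘ (fun n : Fin d → ℤ => n - m) := rfl
      rw [h2, Set.range_comp, hsurj.range_eq, Set.image_univ]
    rwa [heq]⟩

/-- `V ∈ ℓ^∞(ℤ^d)` is periodic if its orbit under translations is finite. -/
def PeriodicSeq {d : ℕ} (V : lp (fun _ : Fin d → ℤ => ℝ) ⊤) : Prop :=
  (Set.range fun m : Fin d → ℤ => Sh m V).Finite

/-- `V ∈ ℓ^∞(ℤ^d)` is limit-periodic if it lies in the `ℓ^∞`-closure of the periodic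
elements. -/
def LimitPeriodicSeq {d : ℕ} (V : lp (fun _ : Fin d → ℤ => ℝ) ⊤) : Prop :=
  V ∈ closure {W : lp (fun _ : Fin d → ℤ => ℝ) ⊤ | PeriodicSeq W}

/-- The hull of `V ∈ ℓ^∞(ℤ^d)`: the closure of its translation orbit. -/
noncomputable def hullSet {d : ℕ} (V : lp (fun _ : Fin d → ℤ => ℝ) ⊤) :
    Set (lp (fun _ : Fin d → ℤ => ℝ) ⊤) :=
  closure (Set.range fun m : Fin d → ℤ => Sh m V)

section Aux

variable {d : ℕ} {Ω : Type} [TopologicalSpace Ω] [AddCommGroup Ω]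
    [IsTopologicalAddGroup Ω] [CompactSpace Ω]
    (α : Fin d → Ω) (f : C(Ω, ℝ)) (V : Ω → lp (fun _ : Fin d → ℤ => ℝ) ⊤)
    (hV : ∀ (ω : Ω) (n : Fin d → ℤ), V ω n = f (ω + ∑ j, n j • α j))

include hV

theorem sh_eq (m : Fin d → ℤ) (ω : Ω) :
    Sh m (V ω) = V (ω - ∑ j, m j • α j) := by
  apply Subtype.ext
  funext n
  show V ω (n - m) = V (ω - ∑ j, m j • α j) n
  rw [hV, hV]
  congr 1
  have : ∑ j, (n j - m j) • α j = ∑ j, n j • α j - ∑ j, m j • α j := by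
    rw [← Finset.sum_sub_distrib]
    exact Finset.sum_congr rfl fun j _ => sub_smul _ _ _
  simp only [Pi.sub_apply, this]
  abel

theorem V_continuous : Continuous V := by
  rw [continuous_iff_continuousAt]
  intro ω₀
  rw [ContinuousAt, Metric.tendsto_nhds]
  intro ε hε
  have key : ∀ᶠ ω in 𝓝 ω₀, ∀ y ∈ (Set.univ : Set Ω), |f (ω - ω₀ + y) - f y| ≤ ε / 2 := by
    apply isCompact_univ.eventually_forall_of_forall_eventually
    intro y₀ _
    have hc : Continuous fun z : Ω × Ω => |f (z.1 - ω₀ + z.2) - f z.2| := by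
      fun_prop
    have h0 : |f ((ω₀, y₀).1 - ω₀ + (ω₀, y₀).2) - f (ω₀, y₀).2| = 0 := by simp
    have := (hc.tendsto (ω₀, y₀)).eventually_le_const (by rw [h0]; positivity :
      |f ((ω₀, y₀).1 - ω₀ + (ω₀, y₀).2) - f (ω₀, y₀).2| < ε / 2)
    exact this
  filter_upwards [key] with ω h
  have hle : ‖V ω - V ω₀‖ ≤ ε / 2 := by
    apply lp.norm_le_of_forall_le (by positivity)
    intro n
    have hc : (V ω - V ω₀) n = V ω n - V ω₀ n := by
      exact lp.coeFn_sub (V ω) (V ω₀) ▸ rfl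
    rw [hc, hV, hV, Real.norm_eq_abs]
    have := h (ω₀ + ∑ j, n j • α j) (Set.mem_univ _)
    have harg : ω - ω₀ + (ω₀ + ∑ j, n j • α j) = ω + ∑ j, n j • α j := by abel
    rw [harg] at this
    exact this
  rw [dist_eq_norm]
  linarith

theorem range_orbit (ω : Ω) :
    (Set.range fun m : Fin d → ℤ => Sh m (V ω)) =
      V '' (Set.range fun n : Fin d → ℤ => ω + ∑ j, n j • α j) := by
  ext W
  constructor
  · rintro ⟨m, rfl⟩
    refine ⟨ω - ∑ j, m j • α j, ⟨-m, ?_⟩, (sh_eq α f V hV m ω).symm⟩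
    simp only [Pi.neg_apply, neg_smul]
    rw [Finset.sum_neg_distrib]
    abel
  · rintro ⟨_, ⟨n, rfl⟩, rfl⟩
    refine ⟨-n, ?_⟩
    show Sh (-n) (V ω) = V (ω + ∑ j, n j • α j)
    rw [sh_eq α f V hV]
    congr 1
    simp only [Pi.neg_apply, neg_smul]
    rw [Finset.sum_neg_distrib]
    abel

end Aux

set_option synthInstance.maxHeartbeats 1000000 in
set_option maxHeartbeats 1000000 in
/-- If `Ω` is a Cantor group admitting a minimal `ℤ^d` action by
translations, `f : Ω → ℝ` is continuous and `V_ω(n) = f(T^n ω)`, then for each `ω ∈ Ω` the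
hull of `V_ω` (the `ℓ^∞`-closure of `{S_m V_ω : m ∈ ℤ^d}`) equals `{V_ω̃ : ω̃ ∈ Ω}`. -/
theorem hull_of_sampling_eq_range (d : ℕ) (Ω : Type) [TopologicalSpace Ω] [AddCommGroup Ω]
    [IsTopologicalAddGroup Ω] [CompactSpace Ω] [TotallyDisconnectedSpace Ω]
    [TopologicalSpace.MetrizableSpace Ω] [Infinite Ω]
    (α : Fin d → Ω)
    (hmin : ∀ ω : Ω, Dense (Set.range fun n : Fin d → ℤ => ω + ∑ j, n j • α j))
    (f : C(Ω, ℝ)) (V : Ω → lp (fun _ : Fin d → ℤ => ℝ) ⊤)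
    (hV : ∀ (ω : Ω) (n : Fin d → ℤ), V ω n = f (ω + ∑ j, n j • α j)) :
    ∀ ω : Ω, hullSet (V ω) = Set.range V := by
  intro ω
  have hVc : Continuous V := V_continuous α f V hV
  rw [hullSet, range_orbit α f V hV ω]
  apply Set.Subset.antisymm
  · have hclosed : IsClosed (Set.range V) := (isCompact_range hVc).isClosed
    exact closure_minimal (Set.image_subset_range _ _) hclosed
  · rintro _ ⟨ω', rfl⟩
    have : ω' ∈ closure (Set.range fun n : Fin d → ℤ => ω + ∑ j, n j • α j) :=
      (hmin ω).closure_eq ▸ Set.mem_univ _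
    exact image_closure_subset_closure_image hVc ⟨ω', this, rfl⟩
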